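/- arXiv:1601.00668 — 5 statements merged into one kernel-verified Lean document; each statement's English description precedes it below -/
import Mathlib

section
/- For every n ≥ 1 and every infinite reduced word ξ ∈ B, the sum Σ_{γ ∈ S_n} (2r-1)^{(γ|ξ) − n/2} equals (2r + 2(r-1)n) · (2r-1)^{n/2 − 1}. In particular the function ξ ↦ Σ_{γ∈S_n} P(γ,ξ)^{1/2} is constant on B, equal to |S_n| · Ξ(n), where P(γ,ξ)^{1/2} = (2r-1)^{(γ|ξ) − |γ|/2}. -/
/-!
Setting: the free group `F_r = ⟨a₁,…,a_r⟩` (`r ≥ 2`), its boundary `B` of infinite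
reduced words, the visual measure `μ` on `B`, the Gromov product, the Poisson kernel
`P(γ,ξ) = (2r-1)^(2(γ|ξ)-|γ|)` and the Harish-Chandra function `Ξ`.
-/

open MeasureTheory Filter Topology ComplexConjugate
open scoped ENNReal

namespace ArxivFree

/-- The alphabet `S = {a₁^{±1},…,a_r^{±1}}` of generators and their inverses:
a letter is a generator together with a sign. -/
abbrev Letter (r : ℕ) := Fin r × Bool

/-- The inverse of a letter. -/
def bar {r : ℕ} (x : Letter r) : Letter r := (x.1, !x.2)

/-- The boundary `B`: infinite reduced words over the alphabet, i.e. sequences of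
letters in which no letter is immediately followed by its inverse. -/
abbrev Boundary (r : ℕ) := {ξ : ℕ → Letter r // ∀ i, ξ (i + 1) ≠ bar (ξ i)}

/-- `l` is a (finite) prefix of the infinite word `ξ`. -/
def IsPrefixSeq {r : ℕ} (l : List (Letter r)) (ξ : ℕ → Letter r) : Prop :=
  ∀ i, i < l.length → l[i]? = some (ξ i)

/-- The cylinder `B_u`: infinite reduced words admitting the reduced word of `u`
as a prefix. -/
def cylinder {r : ℕ} (u : FreeGroup (Fin r)) : Set (Boundary r) :=
  {ξ | IsPrefixSeq (FreeGroup.toWord u) ξ.1}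

/-- The Gromov product: the length of the longest common prefix of the finite word `l`
and the infinite word `ξ`. -/
def gromov {r : ℕ} (l : List (Letter r)) (ξ : ℕ → Letter r) : ℕ :=
  Nat.findGreatest (fun k => ∀ i, i < k → l[i]? = some (ξ i)) l.length

/-- The Poisson kernel `P(γ,ξ) = (2r-1)^(2(γ|ξ) - |γ|)`. -/
noncomputable def PK {r : ℕ} (γ : FreeGroup (Fin r)) (ξ : Boundary r) : ℝ :=
  (2 * (r : ℝ) - 1) ^
    (2 * (gromov (FreeGroup.toWord γ) ξ.1 : ℤ) - ((FreeGroup.toWord γ).length : ℤ))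

/-- The sphere `S_n ⊆ F_r` of elements of word length `n`, as a finite set. -/
noncomputable def sphere (r n : ℕ) : Finset (FreeGroup (Fin r)) :=
  (Set.Finite.preimage (Function.Injective.injOn FreeGroup.toWord_injective)
    (List.finite_length_eq (Letter r) n)).toFinset

/-- The Harish-Chandra function `Ξ(γ) = ∫_B P(γ,ξ)^{1/2} dμ(ξ)`. -/
noncomputable def HC {r : ℕ} (μ : Measure (Boundary r)) (γ : FreeGroup (Fin r)) : ℝ :=
  ∫ ξ, Real.sqrt (PK γ ξ) ∂μ


/-! ### Auxiliary lemmas -/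

variable {r : ℕ}

@[simp] lemma bar_bar (x : Letter r) : bar (bar x) = x := by simp [bar]

lemma eq_bar_iff {x y : Letter r} : y = bar x ↔ x.1 = y.1 ∧ x.2 = !y.2 := by
  constructor
  · rintro rfl; simp [bar]
  · rintro ⟨h1, h2⟩
    have : x = bar y := Prod.ext h1 h2
    rw [this, bar_bar]

lemma chain'_reduce (L : List (Letter r)) :
    (FreeGroup.reduce L).Chain' (fun a b => b ≠ bar a) := by
  induction L with
  | nil => simp [List.Chain']
  | cons x L ih =>
    rw [FreeGroup.reduce.cons]
    cases h : FreeGroup.reduce L with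
    | nil => simp [List.Chain']
    | cons hd tl =>
      rw [h] at ih
      by_cases hc : x.1 = hd.1 ∧ x.2 = !hd.2
      · simpa [hc, List.Chain'] using ih.tail
      · simp only [if_neg hc]
        exact List.IsChain.cons_cons (fun hbar => hc (eq_bar_iff.mp hbar)) ih

lemma reduce_eq_self {l : List (Letter r)} (h : l.Chain' (fun a b => b ≠ bar a)) :
    FreeGroup.reduce l = l := by
  induction l with
  | nil => rfl
  | cons x l ih =>
    rw [FreeGroup.reduce.cons, ih h.tail]
    cases l with
    | nil => rfl
    | cons y t =>
      have hy : y ≠ bar x := (List.isChain_cons_cons.mp h).1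
      simp only [if_neg (fun hc => hy (eq_bar_iff.mpr hc))]

lemma chain'_toWord (γ : FreeGroup (Fin r)) :
    (FreeGroup.toWord γ).Chain' (fun a b => b ≠ bar a) := by
  rw [← FreeGroup.reduce_toWord]
  exact chain'_reduce _

/-! Gromov product recursion -/

lemma gromov_cons_ne {z : Letter r} {t : List (Letter r)} {ξ : ℕ → Letter r}
    (h : z ≠ ξ 0) : gromov (z :: t) ξ = 0 := by
  rw [gromov, Nat.findGreatest_eq_zero_iff]
  intro k hk _ hP
  exact h (by simpa using hP 0 hk)

lemma gromov_cons_eq (t : List (Letter r)) (ξ : ℕ → Letter r) :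
    gromov (ξ 0 :: t) ξ = gromov t (fun i => ξ (i + 1)) + 1 := by
  set ξ' : ℕ → Letter r := fun i => ξ (i + 1) with hξ'
  set m := gromov t ξ' with hm
  have hmle : m ≤ t.length := Nat.findGreatest_le _
  have hPm : ∀ i, i < m → t[i]? = some (ξ' i) := by
    rcases Nat.eq_zero_or_pos m with h0 | h0
    · intro i hi; omega
    · exact Nat.findGreatest_of_ne_zero hm.symm (by omega)
  rw [gromov, Nat.findGreatest_eq_iff]
  refine ⟨by simpa using Nat.succ_le_succ hmle, fun _ => ?_, ?_⟩
  · intro i hi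
    match i with
    | 0 => simp
    | (j+1) => simpa using hPm j (by omega)
  · intro k hk hkle hP
    have hpre : ∀ i, i < k - 1 → t[i]? = some (ξ' i) := by
      intro i hi
      have := hP (i + 1) (by omega)
      simpa [hξ'] using this
    have hkle' : k - 1 ≤ t.length := by simp at hkle; omega
    exact Nat.findGreatest_is_greatest (show m < k - 1 by omega) hkle' hpre

/-! The finsets `A n x` of reduced words of length `n` admissible after the letter `x` -/

def A (r : ℕ) : ℕ → Letter r → Finset (List (Letter r))
  | 0, _ => {[]}
  | n+1, x => (Finset.univ.filter (fun z => z ≠ bar x)).biUnion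
      (fun z => (A r n z).image (z :: ·))

lemma mem_A {n : ℕ} {x : Letter r} {l : List (Letter r)} :
    l ∈ A r n x ↔ l.length = n ∧ l.Chain' (fun a b => b ≠ bar a) ∧ l.head? ≠ some (bar x) := by
  induction n generalizing x l with
  | zero =>
    simp only [A, Finset.mem_singleton]
    constructor
    · rintro rfl; simp [List.Chain']
    · rintro ⟨h, -, -⟩; exact List.length_eq_zero_iff.mp h
  | succ n ih =>
    simp only [A, Finset.mem_biUnion, Finset.mem_filter, Finset.mem_image, Finset.mem_univ,
      true_and]
    constructor
    · rintro ⟨z, hz, t, ht, rfl⟩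
      obtain ⟨hlen, hch, hhd⟩ := ih.mp ht
      refine ⟨by simp [hlen], List.isChain_cons.mpr ⟨?_, hch⟩, by simpa using hz⟩
      intro y hy hbar
      exact hhd (by rw [hy, hbar])
    · rintro ⟨hlen, hch, hhd⟩
      match l with
      | [] => simp at hlen
      | z :: t =>
        obtain ⟨h1, h2⟩ := List.isChain_cons.mp hch
        refine ⟨z, by simpa using hhd, t, ih.mpr ⟨by simpa using hlen, h2, ?_⟩, rfl⟩
        cases ht : t.head? with
        | none => simp
        | some y => simpa using fun h => (h1 y ht) (by rw [h])

lemma A_disjoint {n : ℕ} {z z' : Letter r} (h : z ≠ z') :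
    Disjoint ((A r n z).image (z :: ·)) ((A r n z').image (z' :: ·)) := by
  rw [Finset.disjoint_left]
  rintro l hl hl'
  obtain ⟨t, -, rfl⟩ := Finset.mem_image.mp hl
  obtain ⟨t', -, he⟩ := Finset.mem_image.mp hl'
  exact h (by injection he.symm)

lemma card_filter_ne (x : Letter r) :
    (Finset.univ.filter (fun z => z ≠ bar x)).card = 2 * r - 1 := by
  rw [Finset.filter_ne', Finset.card_erase_of_mem (Finset.mem_univ _)]
  simp [Finset.card_univ]
  omega

lemma card_A (n : ℕ) (x : Letter r) : (A r n x).card = (2 * r - 1) ^ n := by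
  induction n generalizing x with
  | zero => simp [A]
  | succ n ih =>
    rw [A, Finset.card_biUnion (fun z _ z' _ h => A_disjoint h)]
    have hc : ∀ z ∈ Finset.univ.filter (fun z => z ≠ bar x),
        ((A r n z).image (z :: ·)).card = (2 * r - 1) ^ n := by
      intro z _
      rw [Finset.card_image_of_injective _ (fun a b h => by injection h), ih]
    rw [Finset.sum_congr rfl hc, Finset.sum_const, card_filter_ne, smul_eq_mul, pow_succ]
    ring

lemma cast_q (hr : 2 ≤ r) : ((2 * r - 1 : ℕ) : ℝ) = 2 * (r : ℝ) - 1 := by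
  have h : 1 ≤ 2 * r := by omega
  push_cast [h]
  ring

/-! The key sum computation -/

lemma Hsum (hr : 2 ≤ r) : ∀ (n : ℕ) (x : Letter r) (ξ : ℕ → Letter r),
    (∀ i, ξ (i + 1) ≠ bar (ξ i)) → ξ 0 ≠ bar x →
    (∑ l ∈ A r n x, (2 * (r : ℝ) - 1) ^ gromov l ξ) * (2 * (r : ℝ) - 1) =
      (2 * (r : ℝ) - 1) ^ (n + 1) + n * (2 * (r : ℝ) - 2) * (2 * (r : ℝ) - 1) ^ n := by
  intro n
  induction n with
  | zero =>
    intro x ξ hξ h0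
    simp [A, gromov]
  | succ n ih =>
    intro x ξ hξ h0
    have hmem : ξ 0 ∈ Finset.univ.filter (fun z => z ≠ bar x) := by
      simp [h0]
    rw [A, Finset.sum_biUnion (fun z _ z' _ h => A_disjoint h)]
    have himg : ∀ z : Letter r,
        ∑ l ∈ (A r n z).image (z :: ·), (2 * (r : ℝ) - 1) ^ gromov l ξ =
          ∑ t ∈ A r n z, (2 * (r : ℝ) - 1) ^ gromov (z :: t) ξ := by
      intro z
      exact Finset.sum_image (fun a _ b _ h => by injection h)
    rw [← Finset.add_sum_erase _ _ hmem]
    -- the main term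
    have hmain : ∑ l ∈ (A r n (ξ 0)).image ((ξ 0) :: ·), (2 * (r : ℝ) - 1) ^ gromov l ξ =
        (2 * (r : ℝ) - 1) ^ (n + 1) + n * (2 * (r : ℝ) - 2) * (2 * (r : ℝ) - 1) ^ n := by
      rw [himg]
      have : ∀ t ∈ A r n (ξ 0), (2 * (r : ℝ) - 1) ^ gromov (ξ 0 :: t) ξ =
          (2 * (r : ℝ) - 1) ^ gromov t (fun i => ξ (i + 1)) * (2 * (r : ℝ) - 1) := by
        intro t _
        rw [gromov_cons_eq, pow_succ]
      rw [Finset.sum_congr rfl this, ← Finset.sum_mul]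
      exact ih (ξ 0) (fun i => ξ (i + 1)) (fun i => hξ (i + 1)) (hξ 0)
    -- the side terms
    have hside : ∑ z ∈ (Finset.univ.filter (fun z => z ≠ bar x)).erase (ξ 0),
        ∑ l ∈ (A r n z).image (z :: ·), (2 * (r : ℝ) - 1) ^ gromov l ξ =
        (2 * (r : ℝ) - 2) * (2 * (r : ℝ) - 1) ^ n := by
      have hterm : ∀ z ∈ (Finset.univ.filter (fun z => z ≠ bar x)).erase (ξ 0),
          ∑ l ∈ (A r n z).image (z :: ·), (2 * (r : ℝ) - 1) ^ gromov l ξ =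
            (2 * (r : ℝ) - 1) ^ n := by
        intro z hz
        have hz0 : z ≠ ξ 0 := (Finset.mem_erase.mp hz).1
        rw [himg]
        have : ∀ t ∈ A r n z, (2 * (r : ℝ) - 1) ^ gromov (z :: t) ξ = 1 := by
          intro t _
          rw [gromov_cons_ne hz0, pow_zero]
        rw [Finset.sum_congr rfl this, Finset.sum_const, card_A, nsmul_eq_mul,
          Nat.cast_pow, cast_q hr, mul_one]
      rw [Finset.sum_congr rfl hterm, Finset.sum_const,
        Finset.card_erase_of_mem (by simp [h0]), card_filter_ne, nsmul_eq_mul]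
      have h1 : ((2 * r - 1 - 1 : ℕ) : ℝ) = 2 * (r : ℝ) - 2 := by
        have h : 2 ≤ 2 * r := by omega
        push_cast [Nat.sub_sub, h]
        ring
      rw [h1]
    rw [hmain, hside]
    push_cast
    ring

/-! Transfer to the sphere -/

lemma mem_sphere {n : ℕ} {γ : FreeGroup (Fin r)} :
    γ ∈ sphere r n ↔ (FreeGroup.toWord γ).length = n := by
  rw [sphere, Set.Finite.mem_toFinset]
  rfl

def Wfin (r m : ℕ) : Finset (List (Letter r)) :=
  Finset.univ.biUnion (fun z : Letter r => (A r m z).image (z :: ·))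

lemma mem_Wfin {m : ℕ} {l : List (Letter r)} :
    l ∈ Wfin r m ↔ l.length = m + 1 ∧ l.Chain' (fun a b => b ≠ bar a) := by
  simp only [Wfin, Finset.mem_biUnion, Finset.mem_univ, Finset.mem_image, true_and]
  constructor
  · rintro ⟨z, t, ht, rfl⟩
    obtain ⟨hlen, hch, hhd⟩ := mem_A.mp ht
    refine ⟨by simp [hlen], List.isChain_cons.mpr ⟨?_, hch⟩⟩
    intro y hy hbar
    exact hhd (by rw [hy, hbar])
  · rintro ⟨hlen, hch⟩
    match l with
    | [] => simp at hlen
    | z :: t =>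
      obtain ⟨h1, h2⟩ := List.isChain_cons.mp hch
      refine ⟨z, t, mem_A.mpr ⟨by simpa using hlen, h2, ?_⟩, rfl⟩
      cases ht : t.head? with
      | none => simp
      | some y => simpa using fun h => (h1 y ht) (by rw [h])

lemma sphere_eq_image (m : ℕ) : sphere r (m + 1) = (Wfin r m).image FreeGroup.mk := by
  ext γ
  rw [mem_sphere, Finset.mem_image]
  constructor
  · intro h
    exact ⟨FreeGroup.toWord γ, mem_Wfin.mpr ⟨h, chain'_toWord γ⟩, FreeGroup.mk_toWord⟩
  · rintro ⟨l, hl, rfl⟩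
    obtain ⟨hlen, hch⟩ := mem_Wfin.mp hl
    rw [FreeGroup.toWord_mk, reduce_eq_self hch, hlen]

lemma toWord_mk_of_mem {m : ℕ} {l : List (Letter r)} (hl : l ∈ Wfin r m) :
    FreeGroup.toWord (FreeGroup.mk l) = l := by
  rw [FreeGroup.toWord_mk, reduce_eq_self (mem_Wfin.mp hl).2]

lemma sum_sphere_eq (m : ℕ) (F : List (Letter r) → ℝ) :
    ∑ γ ∈ sphere r (m + 1), F (FreeGroup.toWord γ) = ∑ l ∈ Wfin r m, F l := by
  rw [sphere_eq_image, Finset.sum_image]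
  · exact Finset.sum_congr rfl (fun l hl => by rw [toWord_mk_of_mem hl])
  · intro a ha b hb h
    rw [← toWord_mk_of_mem ha, ← toWord_mk_of_mem hb, h]

lemma card_sphere (m : ℕ) : (sphere r (m + 1)).card = 2 * r * (2 * r - 1) ^ m := by
  rw [sphere_eq_image, Finset.card_image_of_injOn, Wfin,
    Finset.card_biUnion (fun z _ z' _ h => A_disjoint h)]
  · have hc : ∀ z ∈ (Finset.univ : Finset (Letter r)),
        ((A r m z).image (z :: ·)).card = (2 * r - 1) ^ m := by
      intro z _
      rw [Finset.card_image_of_injective _ (fun a b h => by injection h), card_A]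
    rw [Finset.sum_congr rfl hc, Finset.sum_const, smul_eq_mul, Finset.card_univ]
    simp [mul_comm]
  · intro a ha b hb h
    rw [← toWord_mk_of_mem ha, ← toWord_mk_of_mem hb, h]

lemma sum_gromov (hr : 2 ≤ r) (m : ℕ) (ξ : Boundary r) :
    ∑ γ ∈ sphere r (m + 1), (2 * (r : ℝ) - 1) ^ gromov (FreeGroup.toWord γ) ξ.1 =
      2 * (2 * (r : ℝ) - 1) ^ (m + 1) + m * (2 * (r : ℝ) - 2) * (2 * (r : ℝ) - 1) ^ m := by
  rw [sum_sphere_eq m (fun l => (2 * (r : ℝ) - 1) ^ gromov l ξ.1), Wfin,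
    Finset.sum_biUnion (fun z _ z' _ h => A_disjoint h)]
  have himg : ∀ z : Letter r,
      ∑ l ∈ (A r m z).image (z :: ·), (2 * (r : ℝ) - 1) ^ gromov l ξ.1 =
        ∑ t ∈ A r m z, (2 * (r : ℝ) - 1) ^ gromov (z :: t) ξ.1 := by
    intro z
    exact Finset.sum_image (fun a _ b _ h => by injection h)
  rw [← Finset.add_sum_erase _ _ (Finset.mem_univ (ξ.1 0))]
  have hmain : ∑ l ∈ (A r m (ξ.1 0)).image ((ξ.1 0) :: ·), (2 * (r : ℝ) - 1) ^ gromov l ξ.1 =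
      (2 * (r : ℝ) - 1) ^ (m + 1) + m * (2 * (r : ℝ) - 2) * (2 * (r : ℝ) - 1) ^ m := by
    rw [himg]
    have : ∀ t ∈ A r m (ξ.1 0), (2 * (r : ℝ) - 1) ^ gromov (ξ.1 0 :: t) ξ.1 =
        (2 * (r : ℝ) - 1) ^ gromov t (fun i => ξ.1 (i + 1)) * (2 * (r : ℝ) - 1) := by
      intro t _
      rw [gromov_cons_eq, pow_succ]
    rw [Finset.sum_congr rfl this, ← Finset.sum_mul]
    exact Hsum hr m (ξ.1 0) (fun i => ξ.1 (i + 1)) (fun i => ξ.2 (i + 1)) (ξ.2 0)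
  have hside : ∑ z ∈ (Finset.univ : Finset (Letter r)).erase (ξ.1 0),
      ∑ l ∈ (A r m z).image (z :: ·), (2 * (r : ℝ) - 1) ^ gromov l ξ.1 =
      (2 * (r : ℝ) - 1) ^ (m + 1) := by
    have hterm : ∀ z ∈ (Finset.univ : Finset (Letter r)).erase (ξ.1 0),
        ∑ l ∈ (A r m z).image (z :: ·), (2 * (r : ℝ) - 1) ^ gromov l ξ.1 =
          (2 * (r : ℝ) - 1) ^ m := by
      intro z hz
      have hz0 : z ≠ ξ.1 0 := (Finset.mem_erase.mp hz).1
      rw [himg]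
      have : ∀ t ∈ A r m z, (2 * (r : ℝ) - 1) ^ gromov (z :: t) ξ.1 = 1 := by
        intro t _
        rw [gromov_cons_ne hz0, pow_zero]
      rw [Finset.sum_congr rfl this, Finset.sum_const, card_A, nsmul_eq_mul,
        Nat.cast_pow, cast_q hr, mul_one]
    rw [Finset.sum_congr rfl hterm, Finset.sum_const,
      Finset.card_erase_of_mem (Finset.mem_univ _), nsmul_eq_mul, Finset.card_univ]
    have h1 : ((Fintype.card (Letter r) - 1 : ℕ) : ℝ) = 2 * (r : ℝ) - 1 := by
      have h : Fintype.card (Letter r) = 2 * r := by simp; omega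
      rw [h]
      exact cast_q hr
    rw [h1, pow_succ]
    ring
  rw [hmain, hside]
  ring



/-- the sum of square roots of the Poisson kernel is constant on the boundary B.
For $n ≥ 1$ and every $ξ ∈ B$,
$Σ_{γ ∈ S_n} (2r-1)^{(γ|ξ) - n/2} = (2r + 2(r-1)n)(2r-1)^{n/2 - 1}$; in particular
$ξ ↦ Σ_{γ∈S_n} P(γ,ξ)^{1/2}$ is constant, equal to $|S_n|·Ξ(n)$ where
$Ξ(n) = (1 + (r-1)n/r)(2r-1)^{-n/2}$. -/
theorem sum_sqrt_poisson_constant {r : ℕ} (hr : 2 ≤ r) {n : ℕ} (hn : 1 ≤ n)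
    (ξ : Boundary r) :
    (∑ γ ∈ sphere r n,
        (2 * (r : ℝ) - 1) ^ ((gromov (FreeGroup.toWord γ) ξ.1 : ℝ) - (n : ℝ) / 2)) =
      (2 * (r : ℝ) + 2 * ((r : ℝ) - 1) * n) * (2 * (r : ℝ) - 1) ^ ((n : ℝ) / 2 - 1) ∧
    (∑ γ ∈ sphere r n, Real.sqrt (PK γ ξ)) =
      ((sphere r n).card : ℝ) *
        ((1 + ((r : ℝ) - 1) * n / r) * (2 * (r : ℝ) - 1) ^ (-(n : ℝ) / 2)) := by
  obtain ⟨m, rfl⟩ : ∃ m, n = m + 1 := ⟨n - 1, by omega⟩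
  set Q : ℝ := 2 * (r : ℝ) - 1 with hQdef
  have hQ0 : (0 : ℝ) < Q := by
    have : (2 : ℝ) ≤ (r : ℝ) := by exact_mod_cast hr
    simp only [hQdef]; linarith
  -- rewrite real-exponent powers as `Q ^ k * Q ^ (-(n)/2)`
  have key : ∀ k : ℕ, Q ^ ((k : ℝ) - ((m + 1 : ℕ) : ℝ) / 2) =
      Q ^ k * Q ^ (-((m + 1 : ℕ) : ℝ) / 2) := by
    intro k
    rw [show (k : ℝ) - ((m + 1 : ℕ) : ℝ) / 2 = (k : ℝ) + (-((m + 1 : ℕ) : ℝ) / 2) by ring,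
      Real.rpow_add hQ0, Real.rpow_natCast]
  have hexp : ((m + 1 : ℕ) : ℝ) / 2 - 1 = (-((m + 1 : ℕ) : ℝ) / 2) + (m : ℝ) := by
    push_cast; ring
  have hrhs : Q ^ (((m + 1 : ℕ) : ℝ) / 2 - 1) = Q ^ (-((m + 1 : ℕ) : ℝ) / 2) * Q ^ m := by
    rw [hexp, Real.rpow_add hQ0, Real.rpow_natCast]
  have hsum := sum_gromov hr m ξ
  have part1 : (∑ γ ∈ sphere r (m + 1),
      Q ^ ((gromov (FreeGroup.toWord γ) ξ.1 : ℝ) - ((m + 1 : ℕ) : ℝ) / 2)) =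
      (2 * (r : ℝ) + 2 * ((r : ℝ) - 1) * ((m + 1 : ℕ) : ℝ)) * Q ^ (((m + 1 : ℕ) : ℝ) / 2 - 1) := by
    rw [Finset.sum_congr rfl (fun γ _ => key (gromov (FreeGroup.toWord γ) ξ.1)),
      ← Finset.sum_mul, hsum, hrhs]
    push_cast
    ring
  refine ⟨part1, ?_⟩
  -- second part
  have hterm : ∀ γ ∈ sphere r (m + 1), Real.sqrt (PK γ ξ) =
      Q ^ ((gromov (FreeGroup.toWord γ) ξ.1 : ℝ) - ((m + 1 : ℕ) : ℝ) / 2) := by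
    intro γ hγ
    have hlen : ((FreeGroup.toWord γ).length : ℤ) = ((m + 1 : ℕ) : ℤ) := by
      exact_mod_cast mem_sphere.mp hγ
    rw [PK, hlen, ← Real.rpow_intCast Q, Real.sqrt_eq_rpow, ← Real.rpow_mul hQ0.le]
    congr 1
    push_cast
    ring
  rw [Finset.sum_congr rfl hterm, part1, card_sphere]
  have hcast : ((2 * r * (2 * r - 1) ^ m : ℕ) : ℝ) = 2 * (r : ℝ) * Q ^ m := by
    rw [Nat.cast_mul, Nat.cast_pow, cast_q hr]
    push_cast
    rfl
  rw [hcast, hrhs, show -((m + 1 : ℕ) : ℝ) / 2 = -(((m + 1 : ℕ) : ℝ)) / 2 by ring]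
  have hr0 : (r : ℝ) ≠ 0 := Nat.cast_ne_zero.mpr (by omega)
  field_simp


end ArxivFree
end

section
/- Let (Z, ν) be a probability measure space and let T be a continuous linear operator from L¹(Z,ν) to itself such that T maps L²(Z,ν) into L²(Z,ν) and L^∞(Z,ν) into L^∞(Z,ν), the restriction T₂ of T to L²(Z,ν) is a bounded self-adjoint operator, and the restriction T_∞ of T to L^∞(Z,ν) has operator norm at most 1 on L^∞. Then ‖T₂‖_{L²→L²} ≤ 1. -/
/-!
**Statement 8** (a corollary of the Riesz–Thorin theorem).
Let (Z,ν) be a probability space and T a continuous linear operator of L¹(Z,ν) which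
maps L² to L² and L^∞ to L^∞, whose restriction to L² is bounded and self-adjoint, and
whose restriction to L^∞ has operator norm at most 1.  Then its restriction to L² has
operator norm at most 1.

Here (since ν is a probability measure) L^∞ ⊆ L² ⊆ L¹, and membership of an element
f of L¹ in L² (resp. L^∞) is expressed as `MemLp (f : Z → ℂ) 2 ν`
(resp. `MemLp (f : Z → ℂ) ⊤ ν`).
-/

open MeasureTheory ComplexConjugate Filter Topology
open scoped ENNReal

/-- Auxiliary: a nonnegative, bounded, log-convex real sequence is "nonincreasing at the
start": `b 1 ≤ b 0`. -/
lemma riesz_thorin_corollary_seq_aux {b : ℕ → ℝ} {B : ℝ} (hb0 : ∀ n, 0 ≤ b n)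
    (hbB : ∀ n, b n ≤ B)
    (hlog : ∀ n, b (n + 1) ^ 2 ≤ b n * b (n + 2)) : b 1 ≤ b 0 := by
  by_contra h
  push_neg at h
  have hb0pos : 0 < b 0 := by
    rcases (hb0 0).lt_or_eq with h0 | h0
    · exact h0
    · exfalso
      have h1 := hlog 0
      nlinarith [hb0 1, hb0 2, h]
  have key : ∀ n, b 1 * b n ≤ b 0 * b (n + 1) := by
    intro n
    induction n with
    | zero => rw [mul_comm]
    | succ n ih =>
      rcases (hb0 (n + 1)).lt_or_eq with hpos | h0
      · nlinarith [hlog n, hb0 n, hb0 (n + 2), hb0 1]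
      · rw [← h0]
        nlinarith [hb0 1, hb0 (n + 2)]
  have key2 : ∀ n, b 1 ^ n * b 0 ≤ b 0 ^ n * b n := by
    intro n
    induction n with
    | zero => simp
    | succ n ih =>
      calc b 1 ^ (n + 1) * b 0 = b 1 * (b 1 ^ n * b 0) := by ring
        _ ≤ b 1 * (b 0 ^ n * b n) := by
            exact mul_le_mul_of_nonneg_left ih (hb0 1)
        _ = b 0 ^ n * (b 1 * b n) := by ring
        _ ≤ b 0 ^ n * (b 0 * b (n + 1)) := by
            exact mul_le_mul_of_nonneg_left (key n) (pow_nonneg (hb0 0) n)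
        _ = b 0 ^ (n + 1) * b (n + 1) := by ring
  have hr : 1 < b 1 / b 0 := (one_lt_div hb0pos).2 h
  obtain ⟨n, hn⟩ := pow_unbounded_of_one_lt (B / b 0) hr
  have h1 : b 1 ^ n * b 0 ≤ b 0 ^ n * B := (key2 n).trans
    (mul_le_mul_of_nonneg_left (hbB n) (pow_nonneg (hb0 0) n))
  rw [div_pow, div_lt_div_iff₀ hb0pos (pow_pos hb0pos n)] at hn
  nlinarith [pow_pos hb0pos n]

theorem riesz_thorin_corollary {Z : Type*} [MeasurableSpace Z]
    (ν : Measure Z) [IsProbabilityMeasure ν]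
    (T : Lp ℂ 1 ν →L[ℂ] Lp ℂ 1 ν)
    -- T maps L² into L²
    (hT2 : ∀ f : Lp ℂ 1 ν, MemLp (f : Z → ℂ) 2 ν → MemLp (T f : Z → ℂ) 2 ν)
    -- T maps L^∞ into L^∞
    (hTinf : ∀ f : Lp ℂ 1 ν, MemLp (f : Z → ℂ) ⊤ ν → MemLp (T f : Z → ℂ) ⊤ ν)
    -- the restriction of T to L² is a bounded operator
    (hT2bdd : ∃ C : ℝ≥0∞, ∀ f : Lp ℂ 1 ν, MemLp (f : Z → ℂ) 2 ν →
      eLpNorm (T f : Z → ℂ) 2 ν ≤ C * eLpNorm (f : Z → ℂ) 2 ν)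
    -- the restriction of T to L² is self-adjoint: ⟨Tf, g⟩ = ⟨f, Tg⟩
    (hT2sa : ∀ f g : Lp ℂ 1 ν, MemLp (f : Z → ℂ) 2 ν → MemLp (g : Z → ℂ) 2 ν →
      ∫ z, (T f : Z → ℂ) z * conj ((g : Z → ℂ) z) ∂ν =
        ∫ z, (f : Z → ℂ) z * conj ((T g : Z → ℂ) z) ∂ν)
    -- the restriction of T to L^∞ has operator norm at most 1
    (hTinf1 : ∀ f : Lp ℂ 1 ν, MemLp (f : Z → ℂ) ⊤ ν →
      eLpNorm (T f : Z → ℂ) ⊤ ν ≤ eLpNorm (f : Z → ℂ) ⊤ ν) :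
    -- conclusion: ‖T‖_{L²→L²} ≤ 1
    ∀ f : Lp ℂ 1 ν, MemLp (f : Z → ℂ) 2 ν →
      eLpNorm (T f : Z → ℂ) 2 ν ≤ eLpNorm (f : Z → ℂ) 2 ν := by
  -- Step 1: "log-convexity" from self-adjointness and Cauchy-Schwarz.
  have CS : ∀ g : Lp ℂ 1 ν, MemLp (g : Z → ℂ) 2 ν →
      (eLpNorm (T g : Z → ℂ) 2 ν).toReal ^ 2 ≤
        (eLpNorm (g : Z → ℂ) 2 ν).toReal * (eLpNorm (T (T g) : Z → ℂ) 2 ν).toReal := by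
    intro g hg
    have hTg := hT2 g hg
    have hTTg := hT2 (T g) hTg
    set G : Lp ℂ 2 ν := hg.toLp _ with hG
    set TG : Lp ℂ 2 ν := hTg.toLp _ with hTG
    set TTG : Lp ℂ 2 ν := hTTg.toLp _ with hTTG
    have e1 : (inner ℂ TG TG : ℂ) = ∫ z, (T g : Z → ℂ) z * conj ((T g : Z → ℂ) z) ∂ν := by
      rw [L2.inner_def]
      refine integral_congr_ae ?_
      filter_upwards [hTg.coeFn_toLp] with z hz
      rw [RCLike.inner_apply, hz, mul_comm]
    have e2 : (inner ℂ TTG G : ℂ) = ∫ z, (g : Z → ℂ) z * conj ((T (T g) : Z → ℂ) z) ∂ν := by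
      rw [L2.inner_def]
      refine integral_congr_ae ?_
      filter_upwards [hTTg.coeFn_toLp, hg.coeFn_toLp] with z hz hz'
      rw [RCLike.inner_apply, hz, hz', mul_comm]
    have key : (inner ℂ TG TG : ℂ) = inner ℂ TTG G := by
      rw [e1, e2]
      exact hT2sa g (T g) hg hTg
    have h1 : ‖TG‖ ^ 2 = RCLike.re (inner ℂ TG TG : ℂ) := (inner_self_eq_norm_sq TG).symm
    have h2 : RCLike.re (inner ℂ TTG G : ℂ) ≤ ‖TTG‖ * ‖G‖ :=
      le_trans (RCLike.re_le_norm _) (norm_inner_le_norm _ _)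
    have := h1.trans_le (key ▸ h2)
    rw [hG, hTG, hTTG, Lp.norm_toLp, Lp.norm_toLp, Lp.norm_toLp] at this
    linarith [this]
  -- Step 2: the conclusion holds for f ∈ L^∞.
  have Linf : ∀ f : Lp ℂ 1 ν, MemLp (f : Z → ℂ) ⊤ ν →
      eLpNorm (T f : Z → ℂ) 2 ν ≤ eLpNorm (f : Z → ℂ) 2 ν := by
    intro f hf
    set g : ℕ → Lp ℂ 1 ν := fun n => T^[n] f with hgdef
    have hgsucc : ∀ n, g (n + 1) = T (g n) := fun n => Function.iterate_succ_apply' T n f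
    have hg0 : g 0 = f := rfl
    have hginf : ∀ n, MemLp (g n : Z → ℂ) ⊤ ν ∧
        eLpNorm (g n : Z → ℂ) ⊤ ν ≤ eLpNorm (f : Z → ℂ) ⊤ ν := by
      intro n
      induction n with
      | zero => exact ⟨hf, le_rfl⟩
      | succ n ih =>
        rw [hgsucc n]
        exact ⟨hTinf _ ih.1, (hTinf1 _ ih.1).trans ih.2⟩
    have hg2 : ∀ n, MemLp (g n : Z → ℂ) 2 ν := fun n => (hginf n).1.mono_exponent le_top
    set b : ℕ → ℝ := fun n => (eLpNorm (g n : Z → ℂ) 2 ν).toReal with hbdef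
    have hbB : ∀ n, b n ≤ (eLpNorm (f : Z → ℂ) ⊤ ν).toReal := by
      intro n
      have h1 : eLpNorm (g n : Z → ℂ) 2 ν ≤ eLpNorm (f : Z → ℂ) ⊤ ν :=
        le_trans (eLpNorm_le_eLpNorm_of_exponent_le le_top (Lp.aestronglyMeasurable _))
          (hginf n).2
      exact ENNReal.toReal_mono hf.2.ne h1
    have hlog : ∀ n, b (n + 1) ^ 2 ≤ b n * b (n + 2) := by
      intro n
      have := CS (g n) (hg2 n)
      rw [← hgsucc n, ← hgsucc (n + 1)] at this
      exact this
    have hb1 : b 1 ≤ b 0 :=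
      riesz_thorin_corollary_seq_aux (fun n => ENNReal.toReal_nonneg) hbB hlog
    have hfin1 : eLpNorm (g 1 : Z → ℂ) 2 ν ≠ ⊤ := (hg2 1).2.ne
    have hfin0 : eLpNorm (g 0 : Z → ℂ) 2 ν ≠ ⊤ := (hg2 0).2.ne
    have := (ENNReal.toReal_le_toReal hfin1 hfin0).mp hb1
    rwa [hgsucc 0, hg0] at this
  -- Step 3: density of simple functions.
  intro f hf
  have hsn : ∀ n : ℕ, ∃ s : SimpleFunc Z ℂ,
      eLpNorm ((f : Z → ℂ) - ⇑s) 2 ν < ((n : ℝ≥0∞) + 1)⁻¹ ∧ MemLp (s : Z → ℂ) 2 ν := by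
    intro n
    exact hf.exists_simpleFunc_eLpNorm_sub_lt (by norm_num)
      (by simp [ENNReal.inv_ne_zero])
  choose s hs hs2 using hsn
  have hsinf : ∀ n, MemLp (s n : Z → ℂ) ⊤ ν := fun n => (s n).memLp_top ν
  have hs1 : ∀ n, MemLp (s n : Z → ℂ) 1 ν := fun n => (hsinf n).mono_exponent le_top
  set F : ℕ → Lp ℂ 1 ν := fun n => (hs1 n).toLp _ with hFdef
  have hFcoe : ∀ n, (F n : Z → ℂ) =ᵐ[ν] s n := fun n => (hs1 n).coeFn_toLp
  have hFinf : ∀ n, MemLp (F n : Z → ℂ) ⊤ ν := fun n => (hsinf n).ae_eq (hFcoe n).symm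
  -- F n → f in L¹
  have hconv : Tendsto F atTop (𝓝 f) := by
    rw [Lp.tendsto_Lp_iff_tendsto_eLpNorm']
    have hbound : ∀ n : ℕ, eLpNorm ((F n : Z → ℂ) - (f : Z → ℂ)) 1 ν ≤ ((n : ℝ≥0∞) + 1)⁻¹ := by
      intro n
      have h1 : eLpNorm ((F n : Z → ℂ) - (f : Z → ℂ)) 1 ν
          = eLpNorm ((s n : Z → ℂ) - (f : Z → ℂ)) 1 ν := by
        refine eLpNorm_congr_ae ?_
        filter_upwards [hFcoe n] with z hz
        simp [hz]
      rw [h1, eLpNorm_sub_comm]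
      refine le_trans (eLpNorm_le_eLpNorm_of_exponent_le (by norm_num)
        ((Lp.aestronglyMeasurable f).sub (s n).aestronglyMeasurable)) (hs n).le
    have hz : Tendsto (fun n : ℕ => ((n : ℝ≥0∞) + 1)⁻¹) atTop (𝓝 0) := by
      have : Tendsto (fun n : ℕ => ((n + 1 : ℕ) : ℝ≥0∞)⁻¹) atTop (𝓝 0) :=
        ENNReal.tendsto_inv_nat_nhds_zero.comp (tendsto_add_atTop_nat 1)
      simpa using this
    exact tendsto_of_tendsto_of_tendsto_of_le_of_le tendsto_const_nhds hz
      (fun n => zero_le) hbound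
  -- T (F n) → T f in L¹, extract an a.e. convergent subsequence
  have hTconv : Tendsto (fun n => T (F n)) atTop (𝓝 (T f)) := (T.continuous.tendsto f).comp hconv
  obtain ⟨ns, hns_mono, hae⟩ :=
    (tendstoInMeasure_of_tendsto_Lp hTconv).exists_seq_tendsto_ae
  -- Fatou
  have fatou : eLpNorm (T f : Z → ℂ) 2 ν ≤
      atTop.liminf fun k => eLpNorm (T (F (ns k)) : Z → ℂ) 2 ν :=
    Lp.eLpNorm_lim_le_liminf_eLpNorm (fun k => Lp.aestronglyMeasurable _) _ hae
  -- bound each term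
  have hbound : ∀ k, eLpNorm (T (F (ns k)) : Z → ℂ) 2 ν ≤
      eLpNorm (f : Z → ℂ) 2 ν + ((ns k : ℝ≥0∞) + 1)⁻¹ := by
    intro k
    refine le_trans (Linf _ (hFinf (ns k))) ?_
    have h1 : eLpNorm (F (ns k) : Z → ℂ) 2 ν = eLpNorm (s (ns k) : Z → ℂ) 2 ν :=
      eLpNorm_congr_ae (hFcoe (ns k))
    rw [h1]
    have h2 : (s (ns k) : Z → ℂ) = (f : Z → ℂ) + ((s (ns k) : Z → ℂ) - (f : Z → ℂ)) := by
      ring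
    calc eLpNorm (s (ns k) : Z → ℂ) 2 ν
        ≤ eLpNorm (f : Z → ℂ) 2 ν + eLpNorm ((s (ns k) : Z → ℂ) - (f : Z → ℂ)) 2 ν := by
          nth_rewrite 1 [h2]
          exact eLpNorm_add_le (Lp.aestronglyMeasurable f)
            ((s (ns k)).aestronglyMeasurable.sub (Lp.aestronglyMeasurable f)) (by norm_num)
      _ ≤ eLpNorm (f : Z → ℂ) 2 ν + ((ns k : ℝ≥0∞) + 1)⁻¹ := by
          rw [eLpNorm_sub_comm]
          exact add_le_add_right (hs (ns k)).le _
  -- the liminf of the bound is ‖f‖₂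
  refine fatou.trans ?_
  have hlim : Tendsto (fun k => eLpNorm (f : Z → ℂ) 2 ν + ((ns k : ℝ≥0∞) + 1)⁻¹) atTop
      (𝓝 (eLpNorm (f : Z → ℂ) 2 ν)) := by
    have h0 : Tendsto (fun k : ℕ => ((ns k : ℝ≥0∞) + 1)⁻¹) atTop (𝓝 0) := by
      have h1 : Tendsto (fun n : ℕ => ((n : ℝ≥0∞) + 1)⁻¹) atTop (𝓝 0) := by
        have : Tendsto (fun n : ℕ => ((n + 1 : ℕ) : ℝ≥0∞)⁻¹) atTop (𝓝 0) :=
          ENNReal.tendsto_inv_nat_nhds_zero.comp (tendsto_add_atTop_nat 1)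
        simpa using this
      exact h1.comp hns_mono.tendsto_atTop
    simpa using (tendsto_const_nhds.add h0)
  calc (atTop.liminf fun k => eLpNorm (T (F (ns k)) : Z → ℂ) 2 ν)
      ≤ atTop.liminf fun k => eLpNorm (f : Z → ℂ) 2 ν + ((ns k : ℝ≥0∞) + 1)⁻¹ :=
        liminf_le_liminf (Eventually.of_forall hbound)
    _ = eLpNorm (f : Z → ℂ) 2 ν := hlim.liminf_eq
end

section
/- Let γ = s₁⋯s_n ∈ F_r be written as a reduced word with n ≥ 1. (i) For 1 ≤ l ≤ n and any reduced word u = s₁⋯s_{l-1} t_l t_{l+1} ⋯ t_{l+k} with t_l ≠ s_l and k ≥ 0, one has ∫_{B_u} P(γ,ξ)^{1/2} dμ(ξ) = 1/(2r(2r-1)^{n/2 + k}). (ii) ∫_{B_γ} P(γ,ξ)^{1/2} dμ(ξ) = (2r-1)/(2r(2r-1)^{n/2}). -/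
/-!
Setting: the free group `F_r = ⟨a₁,…,a_r⟩` (`r ≥ 2`), its boundary `B` of infinite
reduced words, the visual measure `μ` on `B`, the Gromov product, the Poisson kernel
`P(γ,ξ) = (2r-1)^(2(γ|ξ)-|γ|)` and the Harish-Chandra function `Ξ`.
-/

open MeasureTheory Filter Topology ComplexConjugate
open scoped ENNReal

namespace ArxivFree

private lemma measurableSet_cylinder {r : ℕ} (u : FreeGroup (Fin r)) :
    MeasurableSet (cylinder u) := by
  have heq : cylinder u = ⋂ i : Fin (FreeGroup.toWord u).length,
      (fun ξ : Boundary r => ξ.1 (i : ℕ)) ⁻¹'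
        {x | (FreeGroup.toWord u)[(i : ℕ)]? = some x} := by
    ext ξ
    simp only [cylinder, IsPrefixSeq, Set.mem_setOf_eq, Set.mem_iInter, Set.mem_preimage]
    exact ⟨fun h i => h i i.2, fun h i hi => h ⟨i, hi⟩⟩
  rw [heq]
  exact MeasurableSet.iInter fun i =>
    ((measurable_pi_apply _).comp measurable_subtype_coe)
      (Set.to_countable _).measurableSet

private lemma toReal_aux {r : ℕ} (hr : 2 ≤ r) (m : ℕ) :
    ((1 : ℝ≥0∞) / (2 * (r : ℝ≥0∞) * (2 * (r : ℝ≥0∞) - 1) ^ m)).toReal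
      = 1 / (2 * (r : ℝ) * (2 * (r : ℝ) - 1) ^ m) := by
  have h2r : ((2 * (r : ℝ≥0∞)) : ℝ≥0∞) ≠ ⊤ := by
    simp [ENNReal.mul_eq_top]
  rw [one_div, ENNReal.toReal_inv, ENNReal.toReal_mul, ENNReal.toReal_pow,
    ENNReal.toReal_sub_of_le (by
      calc (1 : ℝ≥0∞) ≤ 2 * 1 := by norm_num
      _ ≤ 2 * (r : ℝ≥0∞) := by
          gcongr
          exact_mod_cast Nat.one_le_iff_ne_zero.mpr (by omega)) h2r,
    ENNReal.toReal_mul, ENNReal.toReal_ofNat]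
  simp

/-- Key arithmetic identity for rpow manipulation. -/
private lemma rpow_arith {x c : ℝ} (hx : 0 < x) (hc : 0 < c) (aa bb cc : ℝ)
    (h : bb - aa = -cc) :
    1 / (c * x ^ aa) * x ^ bb = 1 / (c * x ^ cc) := by
  have h1 : x ^ bb = x ^ aa * x ^ (-cc) := by
    rw [← Real.rpow_add hx]; congr 1; linarith
  have ha := (Real.rpow_pos_of_pos hx aa).ne'
  have hcc := (Real.rpow_pos_of_pos hx cc).ne'
  rw [h1, Real.rpow_neg hx.le]
  field_simp

/-- Lemma: integrals of $P(γ,·)^{1/2}$ over cylinders.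
Let $γ = s₁⋯s_n$ be a reduced word, $n ≥ 1$.
(i) For $1 ≤ l ≤ n$ and a reduced word $u = s₁⋯s_{l-1} t_l ⋯ t_{l+k}$ with
$t_l ≠ s_l$ (i.e. $u$ has length $l+k$, agrees with $γ$ on the first $l-1$ letters,
and differs from it at the $l$-th letter):
$∫_{B_u} P(γ,ξ)^{1/2} dμ(ξ) = 1/(2r(2r-1)^{n/2+k})$.
(ii) $∫_{B_γ} P(γ,ξ)^{1/2} dμ(ξ) = (2r-1)/(2r(2r-1)^{n/2})$. -/
theorem integral_sqrt_poisson_on_cylinders {r : ℕ} (hr : 2 ≤ r)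
    [BorelSpace (Boundary r)]
    (μ : Measure (Boundary r)) [IsProbabilityMeasure μ]
    (hμ : ∀ u : FreeGroup (Fin r), u ≠ 1 →
      μ (cylinder u) =
        1 / (2 * (r : ℝ≥0∞) * (2 * (r : ℝ≥0∞) - 1) ^ ((FreeGroup.toWord u).length - 1)))
    (γ : FreeGroup (Fin r)) (hγ : γ ≠ 1) :
    (∀ (u : FreeGroup (Fin r)) (l k : ℕ), 1 ≤ l → l ≤ (FreeGroup.toWord γ).length →
      (FreeGroup.toWord u).length = l + k →
      (FreeGroup.toWord u).take (l - 1) = (FreeGroup.toWord γ).take (l - 1) →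
      (FreeGroup.toWord u)[l - 1]? ≠ (FreeGroup.toWord γ)[l - 1]? →
      ∫ ξ in cylinder u, Real.sqrt (PK γ ξ) ∂μ =
        1 / (2 * (r : ℝ) *
          (2 * (r : ℝ) - 1) ^ (((FreeGroup.toWord γ).length : ℝ) / 2 + (k : ℝ)))) ∧
    (∫ ξ in cylinder γ, Real.sqrt (PK γ ξ) ∂μ =
      (2 * (r : ℝ) - 1) /
        (2 * (r : ℝ) * (2 * (r : ℝ) - 1) ^ (((FreeGroup.toWord γ).length : ℝ) / 2))) := by
  classical
  have hxR : (0:ℝ) < 2 * (r:ℝ) - 1 := by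
    have : (2:ℝ) ≤ (r:ℝ) := by exact_mod_cast hr
    linarith
  have hcR : (0:ℝ) < 2 * (r:ℝ) := by positivity
  set w := FreeGroup.toWord γ with hw
  set n := w.length with hn
  have hn1 : 1 ≤ n := by
    rcases Nat.eq_zero_or_pos n with h | h
    · exact absurd (FreeGroup.toWord_eq_nil_iff.mp (List.length_eq_zero_iff.mp h)) hγ
    · exact h
  constructor
  · intro u l k hl1 hln hlen htake hne
    have hu1 : u ≠ 1 := by
      intro h
      rw [h, FreeGroup.toWord_one] at hlen
      simp at hlen
      omega
    have hpre : ∀ ξ : Boundary r, ξ ∈ cylinder u →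
        ∀ i, i < l + k → (FreeGroup.toWord u)[i]? = some (ξ.1 i) := by
      intro ξ hξ i hi
      exact hξ i (by rw [hlen]; exact hi)
    have hgr : ∀ ξ : Boundary r, ξ ∈ cylinder u → gromov w ξ.1 = l - 1 := by
      intro ξ hξ
      refine Nat.findGreatest_eq_iff.mpr ⟨by omega, ?_, ?_⟩
      · intro _ i hi
        have hil : i < l - 1 := hi
        have hiu : (FreeGroup.toWord u)[i]? = some (ξ.1 i) := hpre ξ hξ i (by omega)
        have h1 : ((FreeGroup.toWord u).take (l-1))[i]? = (w.take (l-1))[i]? := by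
          rw [htake]
        rw [List.getElem?_take, List.getElem?_take, if_pos hil, if_pos hil] at h1
        rw [← h1, hiu]
      · intro m hm hmn hP
        have h1 : w[l-1]? = some (ξ.1 (l-1)) := hP (l-1) hm
        have h2 : (FreeGroup.toWord u)[l-1]? = some (ξ.1 (l-1)) := hpre ξ hξ (l-1) (by omega)
        exact hne (h2.trans h1.symm)
    have hceq : ∫ ξ in cylinder u, Real.sqrt (PK γ ξ) ∂μ
        = (μ (cylinder u)).toReal *
            Real.sqrt ((2*(r:ℝ)-1) ^ (2*(((l-1:ℕ)):ℤ) - (n:ℤ))) := by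
      rw [setIntegral_congr_fun (measurableSet_cylinder u)
        (fun ξ hξ => by rw [PK, ← hw, ← hn, hgr ξ hξ]), setIntegral_const, smul_eq_mul, measureReal_def]
    have hμu : (μ (cylinder u)).toReal
        = 1 / (2*(r:ℝ) * (2*(r:ℝ)-1) ^ (l + k - 1)) := by
      rw [hμ u hu1, hlen, toReal_aux hr]
    have hsq : Real.sqrt ((2*(r:ℝ)-1) ^ (2*(((l-1:ℕ)):ℤ) - (n:ℤ)))
        = (2*(r:ℝ)-1) ^ (((2*(((l-1:ℕ)):ℤ) - (n:ℤ) : ℤ) : ℝ) * (1/2)) := by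
      rw [← Real.rpow_intCast (2*(r:ℝ)-1) (2*(((l-1:ℕ)):ℤ) - (n:ℤ)), Real.sqrt_eq_rpow,
        ← Real.rpow_mul hxR.le]
    rw [hceq, hμu, hsq, ← Real.rpow_natCast (2*(r:ℝ)-1) (l + k - 1)]
    exact rpow_arith hxR hcR _ _ _ (by
      push_cast [Nat.cast_sub hl1, Nat.cast_sub (show 1 ≤ l + k by omega)]
      ring)
  · have hgr : ∀ ξ : Boundary r, ξ ∈ cylinder γ → gromov w ξ.1 = n := by
      intro ξ hξ
      refine Nat.findGreatest_eq_iff.mpr ⟨le_rfl, fun _ i hi => hξ i hi,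
        fun m hm hmn _ => absurd hmn (by omega)⟩
    have hceq : ∫ ξ in cylinder γ, Real.sqrt (PK γ ξ) ∂μ
        = (μ (cylinder γ)).toReal *
            Real.sqrt ((2*(r:ℝ)-1) ^ (2*(n:ℤ) - (n:ℤ))) := by
      rw [setIntegral_congr_fun (measurableSet_cylinder γ)
        (fun ξ hξ => by rw [PK, ← hw, ← hn, hgr ξ hξ]), setIntegral_const, smul_eq_mul, measureReal_def]
    have hμγ : (μ (cylinder γ)).toReal
        = 1 / (2*(r:ℝ) * (2*(r:ℝ)-1) ^ (n - 1)) := by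
      rw [hμ γ hγ, ← hw, ← hn, toReal_aux hr]
    have hsq : Real.sqrt ((2*(r:ℝ)-1) ^ (2*(n:ℤ) - (n:ℤ)))
        = (2*(r:ℝ)-1) ^ (((2*(n:ℤ) - (n:ℤ) : ℤ) : ℝ) * (1/2)) := by
      rw [← Real.rpow_intCast (2*(r:ℝ)-1) (2*(n:ℤ) - (n:ℤ)), Real.sqrt_eq_rpow,
        ← Real.rpow_mul hxR.le]
    have hrhs : (2*(r:ℝ)-1) / (2*(r:ℝ) * (2*(r:ℝ)-1) ^ ((n:ℝ)/2))
        = 1 / (2*(r:ℝ) * (2*(r:ℝ)-1) ^ ((n:ℝ)/2 - 1)) := by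
      have h1 := (Real.rpow_pos_of_pos hxR ((n:ℝ)/2)).ne'
      rw [Real.rpow_sub hxR, Real.rpow_one]
      field_simp
    rw [hceq, hμγ, hsq, hrhs, ← Real.rpow_natCast (2*(r:ℝ)-1) (n - 1)]
    exact rpow_arith hxR hcR _ _ _ (by
      push_cast [Nat.cast_sub hn1]
      ring)

end ArxivFree
end

section
/- For every γ ∈ F_r, the Harish-Chandra function satisfies Ξ(γ) := ∫_B P(γ,ξ)^{1/2} dμ(ξ) = (1 + ((r-1)/r)·|γ|) · (2r-1)^{-|γ|/2}. In particular Ξ(γ) depends only on the word length |γ|. -/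
/-!
Setting: the free group `F_r = ⟨a₁,…,a_r⟩` (`r ≥ 2`), its boundary `B` of infinite
reduced words, the visual measure `μ` on `B`, the Gromov product, the Poisson kernel
`P(γ,ξ) = (2r-1)^(2(γ|ξ)-|γ|)` and the Harish-Chandra function `Ξ`.
-/

open MeasureTheory Filter Topology ComplexConjugate
open scoped ENNReal

namespace ArxivFree

section Aux

lemma reduce_take_of_reduce_eq {α : Type*} [DecidableEq α] {L : List (α × Bool)}
    (h : FreeGroup.reduce L = L) (k : ℕ) :
    FreeGroup.reduce (L.take k) = L.take k := by
  have hsplit : L.take k ++ L.drop k = L := List.take_append_drop k L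
  have hred : FreeGroup.Red (L.take k ++ L.drop k)
      (FreeGroup.reduce (L.take k) ++ L.drop k) :=
    FreeGroup.Red.append_append FreeGroup.reduce.red FreeGroup.Red.refl
  rw [hsplit, ← h] at hred
  have h2 := FreeGroup.reduce.min hred
  rw [h] at h2
  have h3 : L.take k ++ L.drop k = FreeGroup.reduce (L.take k) ++ L.drop k :=
    hsplit.trans h2
  exact (List.append_cancel_right h3).symm

lemma measurableSet_prefix {r : ℕ} (w : List (Letter r)) :
    MeasurableSet {ξ : Boundary r | IsPrefixSeq w ξ.1} := by
  have heq : {ξ : Boundary r | IsPrefixSeq w ξ.1}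
      = ⋂ (i : ℕ), {ξ : Boundary r | i < w.length → w[i]? = some (ξ.1 i)} := by
    ext ξ
    simp only [Set.mem_setOf_eq, Set.mem_iInter, IsPrefixSeq]
  rw [heq]
  refine MeasurableSet.iInter fun i => ?_
  by_cases hi : i < w.length
  · have heq2 : {ξ : Boundary r | i < w.length → w[i]? = some (ξ.1 i)}
        = (fun ξ : Boundary r => ξ.1 i) ⁻¹' {a : Letter r | w[i]? = some a} := by
      ext ξ; simp [hi, eq_comm]
    rw [heq2]
    exact ((measurable_pi_apply i).comp measurable_subtype_coe)
      (Set.toFinite _).measurableSet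
  · have heq2 : {ξ : Boundary r | i < w.length → w[i]? = some (ξ.1 i)} = Set.univ := by
      ext ξ; simp [hi]
    rw [heq2]
    exact MeasurableSet.univ

lemma HC_formula {r : ℕ} (hr : 2 ≤ r)
    (μ : Measure (Boundary r)) [IsProbabilityMeasure μ]
    (hμ : ∀ u : FreeGroup (Fin r), u ≠ 1 →
      μ (cylinder u) =
        1 / (2 * (r : ℝ≥0∞) * (2 * (r : ℝ≥0∞) - 1) ^ ((FreeGroup.toWord u).length - 1)))
    (γ : FreeGroup (Fin r)) :
    HC μ γ = (1 + ((r : ℝ) - 1) / r * ((FreeGroup.toWord γ).length : ℝ)) *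
        (2 * (r : ℝ) - 1) ^ (-((FreeGroup.toWord γ).length : ℝ) / 2) := by
  classical
  set l : List (Letter r) := FreeGroup.toWord γ with hl
  set n : ℕ := l.length with hn
  set c : ℝ := 2 * (r : ℝ) - 1 with hc
  have hr2 : (2 : ℝ) ≤ (r : ℝ) := by exact_mod_cast hr
  have hc3 : (3 : ℝ) ≤ c := by rw [hc]; linarith
  have hc0 : (0 : ℝ) < c := by linarith
  have hc0' : (0 : ℝ) ≤ c := le_of_lt hc0
  have hrne : (r : ℝ) ≠ 0 := by linarith
  set F : ℕ → ℝ := fun k => c ^ ((k : ℝ) - (n : ℝ) / 2) with hF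
  set A : ℕ → Set (Boundary r) :=
    fun k => {ξ : Boundary r | IsPrefixSeq (l.take k) ξ.1} with hA
  have hAmeas : ∀ k, MeasurableSet (A k) := fun k => measurableSet_prefix _
  -- membership in A k versus the Gromov product
  have hmem : ∀ k, k ≤ n → ∀ ξ : Boundary r, (ξ ∈ A k ↔ k ≤ gromov l ξ.1) := by
    intro k hk ξ
    have hlen : (l.take k).length = k := by
      rw [List.length_take]; omega
    constructor
    · intro hξ
      refine Nat.le_findGreatest hk ?_
      intro i hi
      have h1 := hξ i (by omega)
      rwa [List.getElem?_take_of_lt hi] at h1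
    · intro hg i hi
      rw [hlen] at hi
      have hPg : ∀ j, j < gromov l ξ.1 → l[j]? = some (ξ.1 j) :=
        Nat.findGreatest_spec
          (P := fun m => ∀ i, i < m → l[i]? = some (ξ.1 i)) (Nat.zero_le l.length)
          (fun j hj => absurd hj (Nat.not_lt_zero j))
      rw [List.getElem?_take_of_lt hi]
      exact hPg i (by omega)
  -- pointwise decomposition of the integrand
  have hpt : ∀ ξ : Boundary r, Real.sqrt (PK γ ξ)
      = F 0 + ∑ k ∈ Finset.range n,
          (A (k + 1)).indicator (fun _ => F (k + 1) - F k) ξ := by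
    intro ξ
    set g : ℕ := gromov l ξ.1 with hg
    have hgn : g ≤ n := Nat.findGreatest_le _
    have hsq : Real.sqrt (PK γ ξ) = F g := by
      have hPK : PK γ ξ = c ^ (((2 * (g : ℤ) - (n : ℤ) : ℤ)) : ℝ) := by
        rw [PK, ← hl, ← hg, ← hn, ← hc, Real.rpow_intCast]
      rw [hPK, Real.sqrt_eq_rpow, ← Real.rpow_mul hc0']
      simp only [hF]
      congr 1
      push_cast
      ring
    have hind : ∀ k ∈ Finset.range n,
        (A (k + 1)).indicator (fun _ => F (k + 1) - F k) ξ
          = if k < g then F (k + 1) - F k else 0 := by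
      intro k hk
      rw [Finset.mem_range] at hk
      by_cases hkg : k < g
      · rw [Set.indicator_of_mem, if_pos hkg]
        exact (hmem (k + 1) (by omega) ξ).2 (by omega)
      · rw [Set.indicator_of_notMem, if_neg hkg]
        intro hmemk
        have := (hmem (k + 1) (by omega) ξ).1 hmemk
        omega
    rw [Finset.sum_congr rfl hind]
    have hsub : ∑ k ∈ Finset.range n, (if k < g then F (k + 1) - F k else 0)
        = ∑ k ∈ Finset.range g, (if k < g then F (k + 1) - F k else 0) :=
      (Finset.sum_subset (Finset.range_subset_range.2 hgn)
        (fun x _ hx => by rw [if_neg (by simpa using hx)])).symm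
    rw [hsub, Finset.sum_congr rfl
      (fun x hx => if_pos (Finset.mem_range.1 hx)), Finset.sum_range_sub F g, hsq]
    ring
  -- the measure of the cylinders
  have hμA : ∀ k, k < n → (μ (A (k + 1))).toReal = 1 / (2 * (r : ℝ) * c ^ k) := by
    intro k hk
    have hlred : FreeGroup.reduce l = l := by
      rw [hl]; exact FreeGroup.reduce_toWord γ
    have hw : FreeGroup.toWord (FreeGroup.mk (l.take (k + 1))) = l.take (k + 1) := by
      rw [FreeGroup.toWord_mk, reduce_take_of_reduce_eq hlred]
    have hlen : (l.take (k + 1)).length = k + 1 := by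
      rw [List.length_take]; omega
    have hune : FreeGroup.mk (l.take (k + 1)) ≠ 1 := by
      intro h1
      have h2 : (FreeGroup.toWord (FreeGroup.mk (l.take (k + 1)))).length = k + 1 := by
        rw [hw, hlen]
      rw [h1, FreeGroup.toWord_one] at h2
      simp at h2
    have hcyl : cylinder (FreeGroup.mk (l.take (k + 1))) = A (k + 1) := by
      rw [cylinder, hw, hA]
    have hval := hμ _ hune
    rw [hcyl, hw, hlen] at hval
    rw [hval]
    have h1le : (1 : ℝ≥0∞) ≤ 2 * (r : ℝ≥0∞) := by
      calc (1 : ℝ≥0∞) ≤ (r : ℝ≥0∞) := by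
            exact_mod_cast Nat.one_le_cast.2 (by omega)
        _ ≤ 2 * (r : ℝ≥0∞) := le_mul_of_one_le_left zero_le one_le_two
    have htop : (2 : ℝ≥0∞) * (r : ℝ≥0∞) ≠ ⊤ := by
      exact ENNReal.mul_ne_top (by simp) (ENNReal.natCast_ne_top r)
    rw [ENNReal.toReal_div, ENNReal.toReal_mul, ENNReal.toReal_pow,
      ENNReal.toReal_sub_of_le h1le htop, ENNReal.toReal_mul]
    simp only [ENNReal.toReal_one, ENNReal.toReal_ofNat, ENNReal.toReal_natCast]
    rw [hc]
    norm_num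
  -- computing the integral
  have hint : HC μ γ
      = F 0 + ∑ k ∈ Finset.range n, (F (k + 1) - F k) * (μ (A (k + 1))).toReal := by
    rw [HC]
    rw [integral_congr_ae (Filter.Eventually.of_forall hpt)]
    rw [integral_add (integrable_const _)
      (integrable_finset_sum _ fun k _ => (integrable_const _).indicator (hAmeas _))]
    rw [integral_const, probReal_univ, one_smul]
    rw [integral_finset_sum _ fun k _ => (integrable_const _).indicator (hAmeas _)]
    congr 1
    refine Finset.sum_congr rfl fun k _ => ?_
    rw [integral_indicator_const _ (hAmeas _), smul_eq_mul, mul_comm, Measure.real]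
  rw [hint]
  have hterm : ∀ k ∈ Finset.range n,
      (F (k + 1) - F k) * (μ (A (k + 1))).toReal
        = c ^ (-(n : ℝ) / 2) * (c - 1) / (2 * (r : ℝ)) := by
    intro k hk
    rw [hμA k (Finset.mem_range.1 hk)]
    have hF1 : F (k + 1) = c ^ k * c * c ^ (-(n : ℝ) / 2) := by
      simp only [hF]
      rw [show ((k + 1 : ℕ) : ℝ) - (n : ℝ) / 2
          = ((k : ℕ) : ℝ) + (1 + (-(n : ℝ) / 2)) by push_cast; ring]
      rw [Real.rpow_add hc0, Real.rpow_add hc0, Real.rpow_one, Real.rpow_natCast]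
      ring
    have hF0 : F k = c ^ k * c ^ (-(n : ℝ) / 2) := by
      simp only [hF]
      rw [show ((k : ℕ) : ℝ) - (n : ℝ) / 2 = ((k : ℕ) : ℝ) + (-(n : ℝ) / 2) by ring]
      rw [Real.rpow_add hc0, Real.rpow_natCast]
    rw [hF1, hF0]
    have hckne : (c : ℝ) ^ k ≠ 0 := pow_ne_zero _ (ne_of_gt hc0)
    field_simp
  rw [Finset.sum_congr rfl hterm, Finset.sum_const, Finset.card_range, nsmul_eq_mul]
  have hF0' : F 0 = c ^ (-(n : ℝ) / 2) := by
    simp only [hF]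
    congr 1
    push_cast
    ring
  rw [hF0', hc]
  field_simp
  ring

end Aux

/-- Lemma: the Harish-Chandra function.
For every $γ ∈ F_r$, $Ξ(γ) = ∫_B P(γ,ξ)^{1/2} dμ(ξ) = (1 + (r-1)|γ|/r)(2r-1)^{-|γ|/2}$;
in particular $Ξ(γ)$ depends only on $|γ|$. -/
theorem harish_chandra_formula {r : ℕ} (hr : 2 ≤ r)
    [BorelSpace (Boundary r)]
    (μ : Measure (Boundary r)) [IsProbabilityMeasure μ]
    (hμ : ∀ u : FreeGroup (Fin r), u ≠ 1 →
      μ (cylinder u) =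
        1 / (2 * (r : ℝ≥0∞) * (2 * (r : ℝ≥0∞) - 1) ^ ((FreeGroup.toWord u).length - 1)))
    (γ : FreeGroup (Fin r)) :
    HC μ γ = (1 + ((r : ℝ) - 1) / r * ((FreeGroup.toWord γ).length : ℝ)) *
        (2 * (r : ℝ) - 1) ^ (-((FreeGroup.toWord γ).length : ℝ) / 2) ∧
    ∀ γ' : FreeGroup (Fin r),
      (FreeGroup.toWord γ').length = (FreeGroup.toWord γ).length → HC μ γ' = HC μ γ := by
  refine ⟨HC_formula hr μ hμ γ, fun γ' hlen => ?_⟩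
  rw [HC_formula hr μ hμ γ', HC_formula hr μ hμ γ, hlen]

end ArxivFree
end

section
/- For every nontrivial w ∈ F_r there exists a constant C_w > 0, not depending on γ, such that for every γ ∈ F_r with |γ| ≥ 1 whose reduced word does not have the reduced word of w as a prefix, one has (∫_{B_w} P(γ,ξ)^{1/2} dμ(ξ)) / Ξ(γ) ≤ C_w / |γ|. -/
/-!
Setting: the free group `F_r = ⟨a₁,…,a_r⟩` (`r ≥ 2`), its boundary `B` of infinite
reduced words, the visual measure `μ` on `B`, the Gromov product, the Poisson kernel
`P(γ,ξ) = (2r-1)^(2(γ|ξ)-|γ|)` and the Harish-Chandra function `Ξ`.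
-/

open MeasureTheory Filter Topology ComplexConjugate
open scoped ENNReal

namespace ArxivFree

/-! ### Auxiliary lemmas -/

section Aux

variable {r : ℕ}

/-- A word is reduced if no letter is immediately followed by its inverse. -/
def ReducedWord (l : List (Letter r)) : Prop :=
  List.Chain' (fun x y => ¬(x.1 = y.1 ∧ x.2 = !y.2)) l

lemma reduce_eq_self_of_reducedWord {l : List (Letter r)} (h : ReducedWord l) :
    FreeGroup.reduce l = l := by
  induction l with
  | nil => rfl
  | cons a l ih =>
    have ih' := ih h.tail
    rw [FreeGroup.reduce.cons, ih']
    cases l with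
    | nil => rfl
    | cons b t =>
      have hab : ¬(a.1 = b.1 ∧ a.2 = !b.2) := (List.isChain_cons_cons.mp h).1
      simp only [hab, if_false]

lemma reducedWord_toWord (x : FreeGroup (Fin r)) : ReducedWord (FreeGroup.toWord x) := by
  rw [ReducedWord, List.Chain', List.isChain_iff_getElem]
  intro i h
  rintro ⟨h1, h2⟩
  have hi1 : i < x.toWord.length := by omega
  have hi2 : i + 1 < x.toWord.length := by omega
  apply FreeGroup.reduce.not (α := Fin r) (L₁ := x.toWord) (L₂ := x.toWord.take i)
    (L₃ := x.toWord.drop (i + 2)) (x := (x.toWord[i]'hi1).1) (b := (x.toWord[i]'hi1).2)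
  rw [FreeGroup.reduce_toWord]
  have e1 : ((x.toWord[i]'hi1).1, (x.toWord[i]'hi1).2) = x.toWord[i]'hi1 := rfl
  have e2 : ((x.toWord[i]'hi1).1, !(x.toWord[i]'hi1).2) = x.toWord[i + 1]'hi2 := by
    rw [h2, Bool.not_not, h1]
  rw [e1, e2]
  conv_lhs => rw [← List.take_append_drop i x.toWord, List.drop_eq_getElem_cons hi1,
    List.drop_eq_getElem_cons hi2]

lemma toWord_mk_take (x : FreeGroup (Fin r)) (k : ℕ) :
    (FreeGroup.mk ((FreeGroup.toWord x).take k)).toWord = (FreeGroup.toWord x).take k := by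
  rw [FreeGroup.toWord_mk, reduce_eq_self_of_reducedWord ((reducedWord_toWord x).take k)]

lemma gromov_le (l : List (Letter r)) (ξ : ℕ → Letter r) : gromov l ξ ≤ l.length :=
  Nat.findGreatest_le _

lemma le_gromov_iff {l : List (Letter r)} {ξ : ℕ → Letter r} {k : ℕ} (hk : k ≤ l.length) :
    k ≤ gromov l ξ ↔ ∀ i, i < k → l[i]? = some (ξ i) := by
  constructor
  · intro h i hi
    have h0 : gromov l ξ ≠ 0 := by omega
    exact Nat.findGreatest_of_ne_zero rfl h0 i (lt_of_lt_of_le hi h)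
  · intro h
    exact Nat.le_findGreatest hk h

lemma setOf_le_gromov (x : FreeGroup (Fin r)) {k : ℕ}
    (hk : k ≤ (FreeGroup.toWord x).length) :
    {ξ : Boundary r | k ≤ gromov (FreeGroup.toWord x) ξ.1}
      = cylinder (FreeGroup.mk ((FreeGroup.toWord x).take k)) := by
  ext ξ
  simp only [Set.mem_setOf_eq, cylinder, toWord_mk_take, IsPrefixSeq, List.length_take,
    min_eq_left hk, List.getElem?_take, Set.mem_setOf_eq]
  rw [le_gromov_iff hk]
  constructor
  · intro h i hi
    simpa [hi] using h i hi
  · intro h i hi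
    simpa [hi] using h i hi

lemma measurableSet_coord [BorelSpace (Boundary r)] (i : ℕ) (a : Letter r) :
    MeasurableSet {ξ : Boundary r | ξ.1 i = a} := by
  have hcont : Continuous (fun ξ : Boundary r => ξ.1 i) :=
    (continuous_apply i).comp continuous_subtype_val
  have hopen : IsOpen {ξ : Boundary r | ξ.1 i = a} :=
    hcont.isOpen_preimage _ (isOpen_discrete ({a} : Set (Letter r)))
  exact hopen.measurableSet

lemma measurableSet_opt [BorelSpace (Boundary r)] (i : ℕ) (o : Option (Letter r)) :
    MeasurableSet {ξ : Boundary r | o = some (ξ.1 i)} := by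
  cases o with
  | none =>
      have : {ξ : Boundary r | (none : Option (Letter r)) = some (ξ.1 i)} = ∅ := by
        ext ξ; simp
      rw [this]; exact MeasurableSet.empty
  | some a =>
      have : {ξ : Boundary r | some a = some (ξ.1 i)} = {ξ : Boundary r | ξ.1 i = a} := by
        ext ξ; simp [eq_comm]
      rw [this]; exact measurableSet_coord i a

lemma measurableSet_isPrefixSeq [BorelSpace (Boundary r)] (p : List (Letter r)) :
    MeasurableSet {ξ : Boundary r | IsPrefixSeq p ξ.1} := by
  have h : {ξ : Boundary r | IsPrefixSeq p ξ.1}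
      = ⋂ i ∈ Finset.range p.length, {ξ : Boundary r | p[i]? = some (ξ.1 i)} := by
    ext ξ
    simp [IsPrefixSeq]
  rw [h]
  exact MeasurableSet.biInter (Set.to_countable _) (fun i _ => measurableSet_opt i _)

lemma measurableSet_le_gromov [BorelSpace (Boundary r)] (x : FreeGroup (Fin r)) (k : ℕ) :
    MeasurableSet {ξ : Boundary r | k ≤ gromov (FreeGroup.toWord x) ξ.1} := by
  rcases le_or_gt k (FreeGroup.toWord x).length with hk | hk
  · rw [setOf_le_gromov x hk, cylinder, toWord_mk_take]
    exact measurableSet_isPrefixSeq _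
  · have : {ξ : Boundary r | k ≤ gromov (FreeGroup.toWord x) ξ.1} = ∅ := by
      ext ξ
      simp only [Set.mem_setOf_eq, Set.mem_empty_iff_false, iff_false, not_le]
      exact lt_of_le_of_lt (gromov_le _ _) hk
    rw [this]; exact MeasurableSet.empty

lemma measurable_gromov [BorelSpace (Boundary r)] (x : FreeGroup (Fin r)) :
    Measurable (fun ξ : Boundary r => gromov (FreeGroup.toWord x) ξ.1) := by
  apply measurable_to_nat
  intro ξ
  set k := gromov (FreeGroup.toWord x) ξ.1 with hk
  have h : (fun ξ : Boundary r => gromov (FreeGroup.toWord x) ξ.1) ⁻¹' {k}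
      = {ξ : Boundary r | k ≤ gromov (FreeGroup.toWord x) ξ.1}
        \ {ξ : Boundary r | k + 1 ≤ gromov (FreeGroup.toWord x) ξ.1} := by
    ext η
    simp only [Set.mem_preimage, Set.mem_singleton_iff, Set.mem_diff, Set.mem_setOf_eq, not_le]
    omega
  rw [h]
  exact (measurableSet_le_gromov x k).diff (measurableSet_le_gromov x (k + 1))

lemma sqrt_PK_eq (hr : 1 ≤ r) (γ : FreeGroup (Fin r)) (ξ : Boundary r) :
    Real.sqrt (PK γ ξ) = (2 * (r : ℝ) - 1) ^ (gromov (FreeGroup.toWord γ) ξ.1)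
      * (2 * (r : ℝ) - 1) ^ (-((FreeGroup.toWord γ).length : ℝ) / 2) := by
  have h1 : (1 : ℝ) ≤ (r : ℝ) := by exact_mod_cast hr
  have hb : (0 : ℝ) < 2 * (r : ℝ) - 1 := by linarith
  simp only [PK]
  rw [← Real.rpow_intCast (2 * (r : ℝ) - 1), Real.sqrt_eq_rpow, ← Real.rpow_mul hb.le,
    ← Real.rpow_natCast (2 * (r : ℝ) - 1) (gromov (FreeGroup.toWord γ) ξ.1),
    ← Real.rpow_add hb]
  congr 1
  push_cast
  ring

lemma telescope_sum (b : ℝ) : ∀ m : ℕ,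
    ∑ k ∈ Finset.Icc 1 m, (b - 1) * b ^ (k - 1) = b ^ m - 1
  | 0 => by simp
  | (m + 1) => by
    rw [Finset.sum_Icc_succ_top (by omega), telescope_sum b m]
    simp only [Nat.add_sub_cancel]
    ring

end Aux

/-- Lemma: Harish-Chandra estimate.
For every nontrivial $w$ there is $C_w > 0$, independent of $γ$, such that for all
$γ ≠ 1$ whose reduced word does not start with the reduced word of $w$:
$⟨π(γ)1_B, 1_{B_w}⟩/Ξ(γ) = (∫_{B_w} P(γ,ξ)^{1/2} dμ)/Ξ(γ) ≤ C_w/|γ|$. -/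
theorem harish_chandra_estimate {r : ℕ} (hr : 2 ≤ r)
    [BorelSpace (Boundary r)]
    (μ : Measure (Boundary r)) [IsProbabilityMeasure μ]
    (hμ : ∀ u : FreeGroup (Fin r), u ≠ 1 →
      μ (cylinder u) =
        1 / (2 * (r : ℝ≥0∞) * (2 * (r : ℝ≥0∞) - 1) ^ ((FreeGroup.toWord u).length - 1)))
    (w : FreeGroup (Fin r)) (hw : w ≠ 1) :
    ∃ C : ℝ, 0 < C ∧ ∀ γ : FreeGroup (Fin r), 1 ≤ (FreeGroup.toWord γ).length →
      ¬ (FreeGroup.toWord w <+: FreeGroup.toWord γ) →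
      (∫ ξ in cylinder w, Real.sqrt (PK γ ξ) ∂μ) / HC μ γ ≤
        C / ((FreeGroup.toWord γ).length : ℝ) := by
  classical
  have hr' : (2 : ℝ) ≤ (r : ℝ) := by exact_mod_cast hr
  set b : ℝ := 2 * (r : ℝ) - 1 with hbdef
  have hb1 : (1 : ℝ) < b := by rw [hbdef]; linarith
  have hb0 : (0 : ℝ) < b := lt_trans one_pos hb1
  set m := (FreeGroup.toWord w).length with hmdef
  have hm1 : 1 ≤ m := by
    rw [hmdef]
    refine List.length_pos_iff.mpr fun h => hw (FreeGroup.toWord_eq_nil_iff.mp h)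
  refine ⟨2 * b ^ (m - 1), by positivity, ?_⟩
  intro γ hn1 hpre
  set l := FreeGroup.toWord γ with hldef
  set n := l.length with hndef
  set t : ℝ := b ^ (-(n : ℝ) / 2) with htdef
  have ht : 0 < t := Real.rpow_pos_of_pos hb0 _
  set g : Boundary r → ℕ := fun ξ => gromov l ξ.1 with hgdef
  set F : Boundary r → ℝ := fun ξ => b ^ (g ξ) * t with hFdef
  have hF : ∀ ξ, Real.sqrt (PK γ ξ) = F ξ := fun ξ =>
    sqrt_PK_eq (le_trans one_le_two hr) γ ξ
  have hFmeas : Measurable F :=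
    (measurable_from_top (f := fun k : ℕ => b ^ k * t)).comp (measurable_gromov γ)
  have hFnonneg : ∀ ξ, 0 ≤ F ξ := fun ξ => by positivity
  have hFbound : ∀ ξ, F ξ ≤ b ^ n * t := fun ξ =>
    mul_le_mul_of_nonneg_right (pow_le_pow_right₀ hb1.le (gromov_le l ξ.1)) ht.le
  have hFint : Integrable F μ := by
    refine Integrable.mono' (integrable_const (b ^ n * t)) hFmeas.aestronglyMeasurable ?_
    filter_upwards with ξ
    rw [Real.norm_of_nonneg (hFnonneg ξ)]
    exact hFbound ξ
  -- rewrite the goal in terms of F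
  rw [HC]
  simp only [hF]
  -- the cylinder is measurable
  have hcylw : MeasurableSet (cylinder w) := measurableSet_isPrefixSeq _
  -- bound on the Gromov product over the cylinder
  have hgw : ∀ ξ ∈ cylinder w, g ξ + 1 ≤ m := by
    intro ξ hξ
    by_contra hcon
    have hm_le : m ≤ g ξ := by omega
    have hmn : m ≤ n := le_trans hm_le (gromov_le l ξ.1)
    have hagree : ∀ i, i < m → l[i]? = some (ξ.1 i) :=
      fun i hi => ((le_gromov_iff hmn).mp hm_le) i hi
    have hξ' : ∀ i, i < m → (FreeGroup.toWord w)[i]? = some (ξ.1 i) := hξ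
    apply hpre
    have heq : FreeGroup.toWord w = l.take m := by
      apply List.ext_getElem?
      intro i
      rcases lt_or_ge i m with hi | hi
      · rw [List.getElem?_take, if_pos hi, hagree i hi, ← hξ' i hi]
      · rw [List.getElem?_take, if_neg (not_lt.mpr hi),
          List.getElem?_eq_none (le_trans (le_of_eq hmdef.symm) hi)]
    rw [hldef] at heq ⊢
    rw [heq]
    exact List.take_prefix m _
  -- numerator bound
  have hnum : (∫ ξ in cylinder w, F ξ ∂μ) ≤ b ^ (m - 1) * t := by
    have h1 : (∫ ξ in cylinder w, F ξ ∂μ) ≤ ∫ _ in cylinder w, b ^ (m - 1) * t ∂μ := by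
      refine setIntegral_mono_on hFint.integrableOn (integrable_const _).integrableOn hcylw ?_
      intro ξ hξ
      exact mul_le_mul_of_nonneg_right
        (pow_le_pow_right₀ hb1.le (by have := hgw ξ hξ; omega)) ht.le
    rw [setIntegral_const, smul_eq_mul] at h1
    refine le_trans h1 ?_
    have hle1 : μ.real (cylinder w) ≤ 1 := by
      have h := ENNReal.toReal_mono ENNReal.one_ne_top
        (prob_le_one (μ := μ) (s := cylinder w))
      simpa [measureReal_def] using h
    nlinarith [ht.le, pow_pos hb0 (m - 1), hle1,
      mul_nonneg (pow_pos hb0 (m-1)).le ht.le]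
  -- the sets E k
  set E : ℕ → Set (Boundary r) := fun k => {ξ : Boundary r | k ≤ g ξ} with hEdef
  have hEmeas : ∀ k, MeasurableSet (E k) := fun k => measurableSet_le_gromov γ k
  have hEμ : ∀ k, 1 ≤ k → k ≤ n → (μ (E k)).toReal = 1 / (2 * (r : ℝ) * b ^ (k - 1)) := by
    intro k hk1 hkn
    have hEk : E k = cylinder (FreeGroup.mk (l.take k)) := setOf_le_gromov γ hkn
    have hlen : (FreeGroup.toWord (FreeGroup.mk (l.take k))).length = k := by
      rw [hldef, toWord_mk_take, List.length_take]
      exact min_eq_left hkn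
    have hne : FreeGroup.mk (l.take k) ≠ 1 := by
      intro h
      have := congrArg (fun z => (FreeGroup.toWord z).length) h
      simp only [hlen] at this
      rw [show FreeGroup.toWord (1 : FreeGroup (Fin r)) = [] from
        FreeGroup.toWord_eq_nil_iff.mpr rfl] at this
      simp at this
      omega
    rw [hEk, hμ _ hne, hlen]
    have h2r : (2 * (r : ℝ≥0∞) - 1) = ((2 * r - 1 : ℕ) : ℝ≥0∞) := by
      rw [ENNReal.natCast_sub]
      push_cast
      ring
    have hcast : ((2 * r - 1 : ℕ) : ℝ) = b := by
      have h1 : (1 : ℕ) ≤ 2 * r := by omega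
      rw [hbdef]
      push_cast [h1]
      ring
    rw [h2r, ENNReal.toReal_div, ENNReal.toReal_mul, ENNReal.toReal_pow,
      ENNReal.toReal_mul, ENNReal.toReal_natCast, ENNReal.toReal_one, ENNReal.toReal_ofNat,
      ENNReal.toReal_natCast, hcast]
  -- the comparison function G
  set G : Boundary r → ℝ := fun ξ =>
    ∑ k ∈ Finset.Icc 1 n, Set.indicator (E k) (fun _ => (b - 1) * b ^ (k - 1) * t) ξ
    with hGdef
  have hGle : ∀ ξ, G ξ ≤ F ξ := by
    intro ξ
    have hgn : g ξ ≤ n := gromov_le l ξ.1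
    have hsum : G ξ = ∑ k ∈ Finset.Icc 1 (g ξ), (b - 1) * b ^ (k - 1) * t := by
      have hvan : ∀ k ∈ Finset.Icc 1 n, k ∉ Finset.Icc 1 (g ξ) →
          Set.indicator (E k) (fun _ => (b - 1) * b ^ (k - 1) * t) ξ = 0 := by
        intro k hk hk'
        rw [Finset.mem_Icc] at hk hk'
        have hkg : ξ ∉ E k := by
          simp only [hEdef, Set.mem_setOf_eq, not_le]
          omega
        exact Set.indicator_of_notMem hkg _
      have hmem : ∀ k ∈ Finset.Icc 1 (g ξ),
          Set.indicator (E k) (fun _ => (b - 1) * b ^ (k - 1) * t) ξ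
            = (b - 1) * b ^ (k - 1) * t := fun k hk =>
        Set.indicator_of_mem (by
          simp only [hEdef, Set.mem_setOf_eq]
          exact (Finset.mem_Icc.mp hk).2) _
      calc G ξ = ∑ k ∈ Finset.Icc 1 n,
            Set.indicator (E k) (fun _ => (b - 1) * b ^ (k - 1) * t) ξ := rfl
        _ = ∑ k ∈ Finset.Icc 1 (g ξ),
            Set.indicator (E k) (fun _ => (b - 1) * b ^ (k - 1) * t) ξ :=
            (Finset.sum_subset (Finset.Icc_subset_Icc_right hgn) hvan).symm
        _ = ∑ k ∈ Finset.Icc 1 (g ξ), (b - 1) * b ^ (k - 1) * t :=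
            Finset.sum_congr rfl hmem
    rw [hsum, ← Finset.sum_mul, telescope_sum]
    have : b ^ (g ξ) - 1 ≤ b ^ (g ξ) := by linarith
    exact mul_le_mul_of_nonneg_right this ht.le
  have hGint : Integrable G μ := by
    refine integrable_finset_sum _ fun k _ => ?_
    exact (integrable_const _).indicator (hEmeas k)
  have hIG : ∫ ξ, G ξ ∂μ = (n : ℝ) * ((b - 1) / (2 * (r : ℝ)) * t) := by
    simp only [hGdef]
    rw [integral_finset_sum _ fun k _ => (integrable_const _).indicator (hEmeas k)]
    have hterm : ∀ k ∈ Finset.Icc 1 n,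
        (∫ ξ, Set.indicator (E k) (fun _ => (b - 1) * b ^ (k - 1) * t) ξ ∂μ)
          = (b - 1) / (2 * (r : ℝ)) * t := by
      intro k hk
      have hk' := Finset.mem_Icc.mp hk
      rw [integral_indicator_const _ (hEmeas k), smul_eq_mul, measureReal_def, hEμ k hk'.1 hk'.2]
      have hbk : (0 : ℝ) < b ^ (k - 1) := pow_pos hb0 _
      have hr0 : (0 : ℝ) < (r : ℝ) := by linarith
      field_simp
    rw [Finset.sum_congr rfl hterm, Finset.sum_const, Nat.card_Icc]
    simp only [Nat.add_sub_cancel, nsmul_eq_mul]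
  have hD : (n : ℝ) / 2 * t ≤ ∫ ξ, F ξ ∂μ := by
    have h1 : ∫ ξ, G ξ ∂μ ≤ ∫ ξ, F ξ ∂μ := integral_mono hGint hFint hGle
    rw [hIG] at h1
    have h12 : (1 : ℝ) / 2 ≤ (b - 1) / (2 * (r : ℝ)) := by
      rw [div_le_div_iff₀ (by norm_num) (by linarith), hbdef]
      ring_nf
      linarith
    have h2 : (n : ℝ) / 2 * t ≤ (n : ℝ) * ((b - 1) / (2 * (r : ℝ)) * t) := by
      have := mul_le_mul_of_nonneg_right h12 ht.le
      calc (n : ℝ) / 2 * t = (n : ℝ) * ((1 : ℝ) / 2 * t) := by ring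
        _ ≤ (n : ℝ) * ((b - 1) / (2 * (r : ℝ)) * t) :=
            mul_le_mul_of_nonneg_left this (Nat.cast_nonneg n)
    linarith
  -- conclusion
  have hnpos : (0 : ℝ) < (n : ℝ) := by exact_mod_cast hn1
  have hDpos : (0 : ℝ) < (n : ℝ) / 2 * t := by positivity
  have hfinal := div_le_div₀ (by positivity : (0:ℝ) ≤ b ^ (m - 1) * t) hnum hDpos hD
  refine le_trans hfinal ?_
  have heq : (b ^ (m - 1) * t) / ((n : ℝ) / 2 * t) = 2 * b ^ (m - 1) / (n : ℝ) := by
    field_simp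
  rw [heq]

end ArxivFree
end
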